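/- arXiv:2102.08885 — 6 statements merged into one kernel-verified Lean document; each statement's English description precedes it below -/
import Mathlib

section
/- If two sign vectors σ, σ' ∈ {-1,+1}^n differ in at least d coordinates, then for any clustering C of the path's vertices, the sum of disagreements of C on P_n(σ) and on P_n(σ') is at least d; in particular, no clustering has fewer than d/2 disagreements on both paths simultaneously. -/
/-- Number of edges of the labeled path `P_n(σ)` disagreeing with the clustering `c`. -/
def pathErr {n : ℕ} (σ : Fin n → Bool) (c : Fin (n + 1) → ℕ) : ℕ :=
  (Finset.univ.filter fun i : Fin n =>
    (σ i = true ∧ c i.castSucc ≠ c i.succ) ∨ (σ i = false ∧ c i.castSucc = c i.succ)).card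

/-- If the sign vectors `σ, σ'` differ in at least `d` coordinates, then for any
clustering `c` the total number of disagreements on `P_n(σ)` and `P_n(σ')` is at
least `d`; in particular `c` cannot have fewer than `d/2` disagreements on both
paths simultaneously. -/
theorem path_disagreements_of_far_sign_vectors (n d : ℕ) (σ σ' : Fin n → Bool)
    (hd : d ≤ (Finset.univ.filter fun i : Fin n => σ i ≠ σ' i).card)
    (c : Fin (n + 1) → ℕ) :
    d ≤ pathErr σ c + pathErr σ' c ∧
      ¬ ((pathErr σ c : ℝ) < d / 2 ∧ (pathErr σ' c : ℝ) < d / 2) := by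
  have key : d ≤ pathErr σ c + pathErr σ' c := by
    have hsub : (Finset.univ.filter fun i : Fin n => σ i ≠ σ' i) ⊆
        (Finset.univ.filter fun i : Fin n =>
          (σ i = true ∧ c i.castSucc ≠ c i.succ) ∨ (σ i = false ∧ c i.castSucc = c i.succ)) ∪
        (Finset.univ.filter fun i : Fin n =>
          (σ' i = true ∧ c i.castSucc ≠ c i.succ) ∨ (σ' i = false ∧ c i.castSucc = c i.succ)) := by
      intro i hi
      simp only [Finset.mem_filter, Finset.mem_univ, true_and, Finset.mem_union] at hi ⊢
      by_cases hc : c i.castSucc = c i.succ <;> cases hσ : σ i <;> cases hσ' : σ' i <;>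
        simp_all
    calc d ≤ _ := hd
      _ ≤ _ := Finset.card_le_card hsub
      _ ≤ _ := Finset.card_union_le _ _
  refine ⟨key, ?_⟩
  rintro ⟨h1, h2⟩
  have : (d : ℝ) ≤ (pathErr σ c : ℝ) + (pathErr σ' c : ℝ) := by exact_mod_cast key
  linarith
end

section
/- Any ε-differentially private algorithm for correlation clustering on unweighted labeled paths with ε ≤ 0.2 must have expected additive error Ω(n) in the MinDis objective: there exists a sign vector σ ∈ {-1,+1}^n such that the expected disagreement of the output clustering on P_n(σ) is at least βn/2 for β = 0.1 (while the optimum is 0). -/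
open MeasureTheory
open scoped ENNReal

namespace DPAux

open Finset

/-- Hamming distance between two sign vectors. -/
def Hd {n : ℕ} (σ σ' : Fin n → Bool) : ℕ := (Finset.univ.filter fun i => σ i ≠ σ' i).card

lemma measurableSet_all {n : ℕ} (S : Set (Fin (n+1) → ℕ)) : MeasurableSet S :=
  S.to_countable.measurableSet

lemma hd_comm {n : ℕ} (σ σ' : Fin n → Bool) : Hd σ σ' = Hd σ' σ := by
  unfold Hd; congr 1; ext i; simp [ne_comm]

lemma hd_eq_zero {n : ℕ} {σ σ' : Fin n → Bool} (h : Hd σ σ' = 0) : σ = σ' := by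
  funext i
  by_contra hne
  have : i ∈ Finset.univ.filter fun i => σ i ≠ σ' i := by simp [hne]
  simp [Hd, Finset.card_eq_zero] at h
  simp [h] at this

lemma hd_le_err_add {n : ℕ} (σ σ' : Fin n → Bool) (c : Fin (n+1) → ℕ) :
    Hd σ σ' ≤ pathErr σ c + pathErr σ' c := by
  classical
  unfold Hd pathErr
  refine le_trans (Finset.card_le_card ?_) (Finset.card_union_le _ _)
  intro i hi
  simp only [mem_filter, mem_union, mem_univ, true_and] at *
  by_cases h : c i.castSucc = c i.succ <;> rcases Bool.eq_false_or_eq_true (σ i) with h1 | h1 <;>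
    rcases Bool.eq_false_or_eq_true (σ' i) with h2 | h2 <;> simp_all

lemma group_privacy {n : ℕ} (ε : ℝ) (hε : 0 ≤ ε)
    (M : (Fin n → Bool) → Measure (Fin (n + 1) → ℕ))
    (hDP : ∀ σ σ' : Fin n → Bool, Hd σ σ' = 1 →
      ∀ S : Set (Fin (n + 1) → ℕ), MeasurableSet S →
        M σ S ≤ ENNReal.ofReal (Real.exp ε) * M σ' S) :
    ∀ k : ℕ, ∀ σ σ' : Fin n → Bool, Hd σ σ' ≤ k →
      ∀ S : Set (Fin (n + 1) → ℕ), MeasurableSet S →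
        M σ S ≤ (ENNReal.ofReal (Real.exp ε)) ^ k * M σ' S := by
  classical
  have hone : (1:ℝ≥0∞) ≤ ENNReal.ofReal (Real.exp ε) := by
    rw [show (1:ℝ≥0∞) = ENNReal.ofReal 1 by simp]
    exact ENNReal.ofReal_le_ofReal (Real.one_le_exp hε)
  intro k
  induction k with
  | zero => intro σ σ' h S hS
            rw [Nat.le_zero] at h
            rw [hd_eq_zero h]; simp
  | succ k ih =>
    intro σ σ' h S hS
    by_cases heq : σ = σ'
    · subst heq
      calc M σ S = 1 * M σ S := (one_mul _).symm
        _ ≤ (ENNReal.ofReal (Real.exp ε)) ^ (k+1) * M σ S :=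
          mul_le_mul_left (one_le_pow_of_one_le' hone _) _
    · have hne : ∃ i, σ i ≠ σ' i := by
        by_contra hc; push_neg at hc; exact heq (funext hc)
      obtain ⟨i, hi⟩ := hne
      set σ'' := Function.update σ' i (σ i) with hσ''
      have h1 : Hd σ'' σ' = 1 := by
        unfold Hd
        rw [show (Finset.univ.filter fun j => σ'' j ≠ σ' j) = {i} from ?_, Finset.card_singleton]
        ext j
        simp only [Finset.mem_filter, Finset.mem_univ, true_and, Finset.mem_singleton]
        constructor
        · intro hj; by_contra hji
          rw [hσ'', Function.update_of_ne hji] at hj; exact hj rfl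
        · intro hj; subst hj; rw [hσ'', Function.update_self]; exact hi
      have h2 : Hd σ σ'' ≤ k := by
        have hsub : (Finset.univ.filter fun j => σ j ≠ σ'' j) ⊆
            (Finset.univ.filter fun j => σ j ≠ σ' j).erase i := by
          intro j hj
          simp only [Finset.mem_filter, Finset.mem_univ, true_and] at hj
          rw [Finset.mem_erase]
          constructor
          · rintro rfl; rw [hσ'', Function.update_self] at hj; exact hj rfl
          · simp only [Finset.mem_filter, Finset.mem_univ, true_and]
            intro hc; apply hj
            rw [hσ'']
            by_cases hji : j = i
            · subst hji; rw [Function.update_self]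
            · rw [Function.update_of_ne hji]; exact hc
        calc Hd σ σ'' ≤ ((Finset.univ.filter fun j => σ j ≠ σ' j).erase i).card :=
              Finset.card_le_card hsub
          _ = Hd σ σ' - 1 := by
              rw [Finset.card_erase_of_mem]; · rfl
              simp [hi]
          _ ≤ k := by omega
      calc M σ S ≤ (ENNReal.ofReal (Real.exp ε)) ^ k * M σ'' S :=
            ih σ σ'' h2 S hS
        _ ≤ (ENNReal.ofReal (Real.exp ε)) ^ k *
            (ENNReal.ofReal (Real.exp ε) * M σ' S) :=
            mul_le_mul_right (hDP σ'' σ' h1 S hS) _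
        _ = (ENNReal.ofReal (Real.exp ε)) ^ (k+1) * M σ' S := by ring

lemma ball_card_le {n : ℕ} (x : Fin n → Bool) (d : ℕ) :
    ((Finset.univ.filter fun y => Hd x y < d)).card ≤ ∑ i ∈ range d, n.choose i := by
  classical
  have hinj : Set.InjOn (fun y : Fin n → Bool => Finset.univ.filter fun i => x i ≠ y i)
      ((Finset.univ.filter fun y => Hd x y < d) : Finset (Fin n → Bool)) := by
    intro y hy z hz hyz
    have hyz' : (Finset.univ.filter fun i => x i ≠ y i)
        = (Finset.univ.filter fun i => x i ≠ z i) := hyz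
    funext i
    have : (i ∈ Finset.univ.filter fun i => x i ≠ y i) ↔
        (i ∈ Finset.univ.filter fun i => x i ≠ z i) := by rw [hyz']
    simp only [mem_filter, mem_univ, true_and] at this
    rcases Bool.eq_false_or_eq_true (x i) with h | h <;>
      rcases Bool.eq_false_or_eq_true (y i) with h1 | h1 <;>
      rcases Bool.eq_false_or_eq_true (z i) with h2 | h2 <;> simp_all
  have hmaps : ∀ y ∈ (Finset.univ.filter fun y => Hd x y < d),
      (Finset.univ.filter fun i => x i ≠ y i) ∈
        (range d).biUnion (fun k => Finset.powersetCard k (Finset.univ : Finset (Fin n))) := by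
    intro y hy
    simp only [mem_filter, mem_univ, true_and] at hy
    simp only [mem_biUnion, mem_range, Finset.mem_powersetCard]
    exact ⟨Hd x y, hy, Finset.subset_univ _, rfl⟩
  calc ((Finset.univ.filter fun y => Hd x y < d)).card
      ≤ ((range d).biUnion fun k => Finset.powersetCard k (Finset.univ : Finset (Fin n))).card :=
        Finset.card_le_card_of_injOn _ hmaps hinj
    _ ≤ ∑ i ∈ range d, (Finset.powersetCard i (Finset.univ : Finset (Fin n))).card :=
        Finset.card_biUnion_le
    _ = ∑ i ∈ range d, n.choose i := by
        simp [Finset.card_powersetCard]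

lemma exists_code {n : ℕ} (d : ℕ) (hd : 0 < d) (S : Finset (Fin n → Bool)) :
    ∃ C : Finset (Fin n → Bool), C ⊆ S ∧
      (∀ x ∈ C, ∀ y ∈ C, x ≠ y → d ≤ Hd x y) ∧
      S.card ≤ C.card * ∑ i ∈ range d, n.choose i := by
  classical
  induction S using Finset.strongInductionOn with
  | _ S ih =>
    rcases S.eq_empty_or_nonempty with rfl | ⟨x, hx⟩
    · exact ⟨∅, by simp, by simp, by simp⟩
    · set S' := S.filter (fun y => ¬ Hd x y < d) with hS'
      have hssub : S' ⊂ S := by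
        refine Finset.filter_ssubset.2 ⟨x, hx, ?_⟩
        simp [Hd, hd]
      obtain ⟨C', hC'sub, hC'dist, hC'card⟩ := ih S' hssub
      have hHdxx : Hd x x = 0 := by simp [Hd]
      have hxS' : x ∉ S' := by
        rw [hS', Finset.mem_filter]
        push_neg
        intro _
        omega
      have hxC' : x ∉ C' := fun h => hxS' (hC'sub h)
      have hfar : ∀ w ∈ C', d ≤ Hd x w := by
        intro w hw
        have h2 := hC'sub hw
        rw [hS', Finset.mem_filter] at h2
        omega
      refine ⟨insert x C', ?_, ?_, ?_⟩
      · intro y hy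
        rcases Finset.mem_insert.1 hy with rfl | hy
        · exact hx
        · exact (Finset.filter_subset _ _) (hC'sub hy)
      · intro a ha b hb hab
        rcases Finset.mem_insert.1 ha with ha' | ha' <;>
          rcases Finset.mem_insert.1 hb with hb' | hb'
        · exact absurd (ha'.trans hb'.symm) hab
        · subst ha'; exact hfar b hb'
        · subst hb'; rw [hd_comm]; exact hfar a ha'
        · exact hC'dist a ha' b hb' hab
      · have hsplit : S.card = (S.filter (fun y => Hd x y < d)).card + S'.card := by
          rw [hS']
          exact (Finset.card_filter_add_card_filter_not _).symm
        have hsub2 : S.filter (fun y => Hd x y < d) ⊆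
            Finset.univ.filter (fun y => Hd x y < d) := by
          intro y hy
          rw [Finset.mem_filter] at *
          exact ⟨Finset.mem_univ _, hy.2⟩
        have hball : (S.filter (fun y => Hd x y < d)).card ≤ ∑ i ∈ range d, n.choose i :=
          le_trans (Finset.card_le_card hsub2) (ball_card_le x d)
        have hcardins : (insert x C').card = C'.card + 1 :=
          Finset.card_insert_of_notMem hxC'
        rw [hcardins]
        calc S.card = (S.filter (fun y => Hd x y < d)).card + S'.card := hsplit
          _ ≤ (∑ i ∈ range d, n.choose i) + C'.card * ∑ i ∈ range d, n.choose i :=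
              Nat.add_le_add hball hC'card
          _ = (C'.card + 1) * ∑ i ∈ range d, n.choose i := by ring

lemma sum_choose_le {n d : ℕ} (hd : d ≤ n + 1) :
    ((∑ i ∈ range d, n.choose i : ℕ) : ℝ) ≤ 7 ^ (d - 1) * (8 / 7) ^ n := by
  push_cast
  have h1 : ∀ i ∈ range d, (n.choose i : ℝ) ≤ 7 ^ (d - 1) * ((1/7 : ℝ) ^ i * n.choose i) := by
    intro i hi
    rw [mem_range] at hi
    have hpow : (7 : ℝ) ^ i ≤ 7 ^ (d - 1) := by
      apply pow_le_pow_right₀ (by norm_num)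
      omega
    have h17 : (1/7 : ℝ) ^ i = ((7:ℝ) ^ i)⁻¹ := by
      rw [one_div, inv_pow]
    have hge : (1:ℝ) ≤ 7 ^ (d-1) * (1/7 : ℝ) ^ i := by
      rw [h17, ← div_eq_mul_inv, le_div_iff₀ (by positivity), one_mul]
      exact hpow
    calc (n.choose i : ℝ) = 1 * n.choose i := (one_mul _).symm
      _ ≤ (7 ^ (d-1) * (1/7:ℝ)^i) * n.choose i := by
          apply mul_le_mul_of_nonneg_right hge (by positivity)
      _ = 7 ^ (d - 1) * ((1/7 : ℝ) ^ i * n.choose i) := by ring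
  calc (∑ i ∈ range d, (n.choose i : ℝ))
      ≤ ∑ i ∈ range d, 7 ^ (d - 1) * ((1/7 : ℝ) ^ i * n.choose i) := Finset.sum_le_sum h1
    _ = 7 ^ (d - 1) * ∑ i ∈ range d, ((1/7 : ℝ) ^ i * n.choose i) := by
        rw [Finset.mul_sum]
    _ ≤ 7 ^ (d - 1) * ∑ i ∈ range (n+1), ((1/7 : ℝ) ^ i * n.choose i) := by
        apply mul_le_mul_of_nonneg_left _ (by positivity)
        apply Finset.sum_le_sum_of_subset_of_nonneg
        · exact Finset.range_subset_range.2 hd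
        · intro i _ _; positivity
    _ = 7 ^ (d - 1) * (8/7 : ℝ) ^ n := by
        congr 1
        have := add_pow (1/7 : ℝ) 1 n
        simp only [one_pow, mul_one] at this
        rw [show (8/7 : ℝ) = 1/7 + 1 by norm_num, this]

lemma markov_side {n : ℕ} (M : Measure (Fin (n+1) → ℕ)) [IsProbabilityMeasure M]
    (σ : Fin n → Bool) (d : ℕ) (hd : 0.11 * (n:ℝ) ≤ (d:ℝ))
    (hS : M {c | 2 * pathErr σ c < d} ≤ 11⁻¹) :
    ENNReal.ofReal (0.05 * n) ≤ ∫⁻ c, (pathErr σ c : ℝ≥0∞) ∂M := by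
  set a : ℝ≥0∞ := ENNReal.ofReal (0.055 * n) with ha
  have hsub : {c : Fin (n+1) → ℕ | 2 * pathErr σ c < d}ᶜ ⊆
      {c | a ≤ (pathErr σ c : ℝ≥0∞)} := by
    intro c hc
    simp only [Set.mem_compl_iff, Set.mem_setOf_eq, not_lt] at hc
    simp only [Set.mem_setOf_eq, ha]
    rw [show ((pathErr σ c : ℝ≥0∞)) = ENNReal.ofReal (pathErr σ c : ℝ) by
      simp [ENNReal.ofReal_natCast]]
    apply ENNReal.ofReal_le_ofReal
    have : (d : ℝ) ≤ 2 * pathErr σ c := by exact_mod_cast hc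
    nlinarith
  have hmeas : M {c | a ≤ (pathErr σ c : ℝ≥0∞)} ≥ 1 - 11⁻¹ := by
    have hcompl : M {c : Fin (n+1) → ℕ | 2 * pathErr σ c < d}ᶜ =
        1 - M {c | 2 * pathErr σ c < d} := by
      rw [measure_compl (measurableSet_all _) (measure_ne_top _ _)]
      simp
    calc 1 - 11⁻¹ ≤ 1 - M {c : Fin (n+1) → ℕ | 2 * pathErr σ c < d} :=
          tsub_le_tsub_left hS 1
      _ = M {c : Fin (n+1) → ℕ | 2 * pathErr σ c < d}ᶜ := hcompl.symm
      _ ≤ M {c | a ≤ (pathErr σ c : ℝ≥0∞)} := measure_mono hsub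
  have hlin : a * M {c | a ≤ (pathErr σ c : ℝ≥0∞)} ≤ ∫⁻ c, (pathErr σ c : ℝ≥0∞) ∂M :=
    mul_meas_ge_le_lintegral₀ (Measurable.aemeasurable (measurable_of_countable _)) a
  refine le_trans ?_ (le_trans (mul_le_mul_right hmeas a) hlin)
  have h1011 : (1 : ℝ≥0∞) - 11⁻¹ = ENNReal.ofReal (10/11) := by
    rw [show (1:ℝ≥0∞) = ENNReal.ofReal 1 by simp,
      show (11⁻¹ : ℝ≥0∞) = ENNReal.ofReal (1/11) by
        rw [ENNReal.ofReal_div_of_pos (by norm_num)]; norm_num,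
      ← ENNReal.ofReal_sub _ (by norm_num)]
    norm_num
  rw [h1011, ha, ← ENNReal.ofReal_mul (by positivity)]
  apply ENNReal.ofReal_le_ofReal
  have hn : (0:ℝ) ≤ n := Nat.cast_nonneg n
  nlinarith

lemma exp02_le : Real.exp 0.2 ≤ 1.2215 := by
  have h5 : Real.exp 0.2 ^ 5 = Real.exp 1 := by
    rw [← Real.exp_nat_mul]; norm_num
  have h : Real.exp 0.2 ^ 5 ≤ (1.2215:ℝ) ^ 5 := by
    rw [h5]
    calc Real.exp 1 ≤ 2.7182818286 := Real.exp_one_lt_d9.le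
      _ ≤ (1.2215:ℝ) ^ 5 := by norm_num
  exact le_of_pow_le_pow_left₀ (by norm_num) (by norm_num) h

lemma numeric {n : ℕ} (hn : 1000 ≤ n) :
    12 * Real.exp (0.2 * n) * (343:ℝ) ^ (n / 25) ≤ (7/4 : ℝ) ^ n := by
  have hexp : Real.exp (0.2 * n) ≤ (1.2215:ℝ) ^ n := by
    rw [show (0.2 * (n:ℝ)) = (n:ℝ) * 0.2 by ring, Real.exp_nat_mul]
    exact pow_le_pow_left₀ (Real.exp_nonneg _) exp02_le n
  have h343 : ((343:ℝ)) ^ (n / 25) ≤ (1.27:ℝ) ^ n := by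
    calc (343:ℝ) ^ (n/25) ≤ ((1.27:ℝ) ^ 25) ^ (n/25) :=
          pow_le_pow_left₀ (by norm_num) (by norm_num) _
      _ = (1.27:ℝ) ^ (25 * (n/25)) := by rw [← pow_mul]
      _ ≤ (1.27:ℝ) ^ n := pow_le_pow_right₀ (by norm_num) (Nat.mul_div_le n 25)
  have h12 : (12:ℝ) ≤ (1.128:ℝ) ^ n := by
    calc (12:ℝ) ≤ (1.128:ℝ) ^ 30 := by norm_num
      _ ≤ (1.128:ℝ) ^ n := pow_le_pow_right₀ (by norm_num) (by omega)
  calc 12 * Real.exp (0.2 * n) * (343:ℝ) ^ (n/25)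
      ≤ ((1.128:ℝ) ^ n * (1.2215:ℝ) ^ n) * (1.27:ℝ) ^ n := by
        apply mul_le_mul _ h343 (by positivity) (by positivity)
        exact mul_le_mul h12 hexp (Real.exp_nonneg _) (by positivity)
    _ = ((1.128 * 1.2215 * 1.27 : ℝ)) ^ n := by rw [mul_pow, mul_pow]
    _ ≤ (7/4 : ℝ) ^ n := pow_le_pow_left₀ (by norm_num) (by norm_num) n

end DPAux

/-- Lower bound for private correlation clustering on unweighted paths:
for all sufficiently large `n`, any `ε`-differentially private algorithm `M`
(with `0 < ε ≤ 0.2`, where neighboring inputs are sign vectors differing in one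
coordinate) mapping a sign vector `σ ∈ {±1}^n` to a distribution over clusterings
of the path `P_n(σ)` must, on some input `σ`, have expected disagreement at least
`βn/2 = 0.05·n` (while the optimum is `0`). -/
theorem dp_path_clustering_lower_bound :
    ∃ N : ℕ, ∀ n ≥ N, ∀ ε : ℝ, 0 < ε → ε ≤ 0.2 →
      ∀ M : (Fin n → Bool) → Measure (Fin (n + 1) → ℕ),
        (∀ σ, IsProbabilityMeasure (M σ)) →
        (∀ σ σ' : Fin n → Bool,
          (Finset.univ.filter fun i : Fin n => σ i ≠ σ' i).card = 1 →
          ∀ S : Set (Fin (n + 1) → ℕ), MeasurableSet S →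
            M σ S ≤ ENNReal.ofReal (Real.exp ε) * M σ' S) →
        ∃ σ : Fin n → Bool,
          ENNReal.ofReal (0.05 * n) ≤ ∫⁻ c, (pathErr σ c : ℝ≥0∞) ∂(M σ) := by
  classical
  refine ⟨1000, ?_⟩
  intro n hn ε hε0 hε2 M hprob hDP
  by_contra hcon
  push_neg at hcon
  set m := n / 25 with hm
  set d := 3 * m + 1 with hd
  set B := ∑ i ∈ Finset.range d, n.choose i with hB
  obtain ⟨C, -, hCdist, hCcard⟩ := DPAux.exists_code d (by omega)
    (Finset.univ : Finset (Fin n → Bool))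
  rw [Finset.card_univ, Fintype.card_fun, Fintype.card_bool, Fintype.card_fin] at hCcard
  -- real lower bound on the code size
  have hd_n1 : d ≤ n + 1 := by omega
  have hBle : (B:ℝ) ≤ 7 ^ (d-1) * (8/7) ^ n := DPAux.sum_choose_le hd_n1
  have h7d : (7:ℝ) ^ (d-1) = 343 ^ m := by
    rw [show d - 1 = 3 * m by omega, pow_mul]
    norm_num
  have hClb : 12 * Real.exp (0.2 * n) ≤ (C.card : ℝ) := by
    have h2n : (2:ℝ) ^ n ≤ (C.card : ℝ) * B := by exact_mod_cast hCcard
    have hstep : (2:ℝ) ^ n ≤ (C.card : ℝ) * (343 ^ m * (8/7) ^ n) := by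
      calc (2:ℝ) ^ n ≤ (C.card : ℝ) * B := h2n
        _ ≤ (C.card : ℝ) * (343 ^ m * (8/7) ^ n) := by
            apply mul_le_mul_of_nonneg_left _ (Nat.cast_nonneg _)
            rw [← h7d]; exact hBle
    have hkey : (7/4 : ℝ) ^ n ≤ (C.card : ℝ) * 343 ^ m := by
      have h78 : (7/4 : ℝ) ^ n = 2 ^ n * (7/8) ^ n := by
        rw [← mul_pow]; norm_num
      have h87 : ((8:ℝ)/7) ^ n * (7/8) ^ n = 1 := by
        rw [← mul_pow]; norm_num
      calc (7/4 : ℝ) ^ n = 2 ^ n * (7/8) ^ n := h78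
        _ ≤ ((C.card : ℝ) * (343 ^ m * (8/7) ^ n)) * (7/8) ^ n := by
            apply mul_le_mul_of_nonneg_right hstep (by positivity)
        _ = (C.card : ℝ) * 343 ^ m * ((8/7) ^ n * (7/8) ^ n) := by ring
        _ = (C.card : ℝ) * 343 ^ m := by rw [h87, mul_one]
    have hnum := DPAux.numeric hn
    have h343pos : (0:ℝ) < 343 ^ m := by positivity
    have : 12 * Real.exp (0.2 * n) * 343 ^ m ≤ (C.card : ℝ) * 343 ^ m := by
      calc 12 * Real.exp (0.2 * n) * 343 ^ m ≤ (7/4:ℝ) ^ n := hnum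
        _ ≤ (C.card : ℝ) * 343 ^ m := hkey
    exact le_of_mul_le_mul_right this h343pos
  -- the bad event sets
  set S : (Fin n → Bool) → Set (Fin (n+1) → ℕ) :=
    fun σ => {c | 2 * pathErr σ c < d} with hSdef
  have hbig : ∀ σ, (11⁻¹ : ℝ≥0∞) < M σ (S σ) := by
    intro σ
    by_contra hle
    push_neg at hle
    haveI := hprob σ
    have hd11 : 0.11 * (n:ℝ) ≤ (d:ℝ) := by
      have hnat : 11 * n ≤ 100 * d := by omega
      have : (11:ℝ) * n ≤ 100 * d := by exact_mod_cast hnat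
      nlinarith
    exact absurd (DPAux.markov_side (M σ) σ d hd11 hle) (not_le.2 (hcon σ))
  -- group privacy
  set K := (ENNReal.ofReal (Real.exp ε)) ^ n with hK
  have hgp := DPAux.group_privacy ε hε0.le M hDP n
  -- the code is nonempty
  have hCne : C.Nonempty := by
    rw [← Finset.card_pos]
    rcases Nat.eq_zero_or_pos C.card with h | h
    · exfalso
      rw [h, zero_mul] at hCcard
      have : 0 < 2 ^ n := Nat.pow_pos (by norm_num)
      omega
    · exact h
  obtain ⟨σ0, hσ0⟩ := hCne
  -- disjointness
  have hdisj : (↑C : Set (Fin n → Bool)).PairwiseDisjoint S := by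
    intro σ hσ σ' hσ' hne
    rw [Function.onFun, Set.disjoint_left]
    intro c hc hc'
    have h1 := DPAux.hd_le_err_add σ σ' c
    have h2 := hCdist σ (by exact_mod_cast hσ) σ' (by exact_mod_cast hσ') hne
    simp only [hSdef, Set.mem_setOf_eq] at hc hc'
    omega
  have hsum : ∑ σ ∈ C, M σ0 (S σ) ≤ 1 := by
    rw [← measure_biUnion_finset hdisj (fun _ _ => DPAux.measurableSet_all _)]
    exact prob_le_one
  have hKsum : (C.card : ℝ≥0∞) * 11⁻¹ ≤ K := by
    calc (C.card : ℝ≥0∞) * 11⁻¹ = ∑ _σ ∈ C, (11⁻¹:ℝ≥0∞) := by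
          rw [Finset.sum_const, nsmul_eq_mul]
      _ ≤ ∑ σ ∈ C, M σ (S σ) := Finset.sum_le_sum fun σ _ => (hbig σ).le
      _ ≤ ∑ σ ∈ C, K * M σ0 (S σ) := by
          apply Finset.sum_le_sum
          intro σ _
          apply hgp σ σ0 _ (S σ) (DPAux.measurableSet_all _)
          calc DPAux.Hd σ σ0 ≤ (Finset.univ : Finset (Fin n)).card :=
                Finset.card_filter_le _ _
            _ = n := by simp
      _ = K * ∑ σ ∈ C, M σ0 (S σ) := by rw [Finset.mul_sum]
      _ ≤ K * 1 := mul_le_mul_right hsum K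
      _ = K := mul_one K
  have hKup : K ≤ ENNReal.ofReal (Real.exp (0.2 * n)) := by
    rw [hK, show Real.exp (0.2 * n) = (Real.exp 0.2) ^ n by
      rw [show (0.2 * (n:ℝ)) = (n:ℝ) * 0.2 by ring, Real.exp_nat_mul],
      ENNReal.ofReal_pow (Real.exp_nonneg _)]
    exact pow_le_pow_left' (ENNReal.ofReal_le_ofReal (Real.exp_le_exp.2 hε2)) n
  have hlb : ENNReal.ofReal (Real.exp (0.2 * n)) < (C.card : ℝ≥0∞) * 11⁻¹ := by
    have h11 : (11⁻¹ : ℝ≥0∞) = ENNReal.ofReal (1/11) := by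
      rw [one_div, ENNReal.ofReal_inv_of_pos (by norm_num)]
      norm_num
    have h1 : (C.card : ℝ≥0∞) * 11⁻¹ = ENNReal.ofReal ((C.card : ℝ) * (1/11)) := by
      rw [ENNReal.ofReal_mul (Nat.cast_nonneg _), ENNReal.ofReal_natCast, ← h11]
    rw [h1]
    apply ENNReal.ofReal_lt_ofReal_iff_of_nonneg (Real.exp_nonneg _) |>.2
    have hpos : 0 < Real.exp (0.2 * n) := Real.exp_pos _
    nlinarith
  exact absurd (lt_of_lt_of_le hlb hKsum) (not_lt.2 hKup)
end

section
/- Let G and H be labeled graphs on the same vertex set V such that for all S, T ⊆ V, |w_G⁺(S,T) - w_H⁺(S,T)| ≤ η and |w_G⁻(S,T) - w_H⁻(S,T)| ≤ η. Then for any clustering C with k clusters, |err(C, G) - err(C, H)| ≤ 2kη and |agr(C, G) - agr(C, H)| ≤ 2kη. -/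
/-- Cut weight between vertex sets `S` and `T` (over ordered pairs). -/
def cutW {V : Type*} [Fintype V] (w : V → V → ℝ) (S T : Finset V) : ℝ :=
  ∑ u ∈ S, ∑ v ∈ T, w u v

/-- Disagreement of the clustering `c` with the labeled graph given by positive
weights `wpos` and negative weights `wneg`: total weight of positive edges crossing
clusters plus negative edges within clusters. -/
def errW {V : Type*} [Fintype V] {k : ℕ} (wpos wneg : V → V → ℝ) (c : V → Fin k) : ℝ :=
  ∑ u, ∑ v, if c u = c v then wneg u v else wpos u v

/-- Agreement of the clustering `c` with the labeled graph: total weight of positive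
edges within clusters plus negative edges crossing clusters. -/
def agrW {V : Type*} [Fintype V] {k : ℕ} (wpos wneg : V → V → ℝ) (c : V → Fin k) : ℝ :=
  ∑ u, ∑ v, if c u = c v then wpos u v else wneg u v

lemma errW_decomp {V : Type*} [Fintype V] {k : ℕ} (wpos wneg : V → V → ℝ) (c : V → Fin k) :
    errW wpos wneg c = ∑ i : Fin k,
      (cutW wneg (Finset.univ.filter (fun v => c v = i)) (Finset.univ.filter (fun v => c v = i)) +
       cutW wpos (Finset.univ.filter (fun v => c v = i)) (Finset.univ.filter (fun v => ¬ c v = i))) := by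
  unfold errW cutW
  rw [← Finset.sum_fiberwise Finset.univ c
      (fun u => ∑ v, if c u = c v then wneg u v else wpos u v)]
  refine Finset.sum_congr rfl fun i _ => ?_
  rw [← Finset.sum_add_distrib]
  refine Finset.sum_congr rfl fun u hu => ?_
  have hcu : c u = i := (Finset.mem_filter.mp hu).2
  have : ∀ v, (if c u = c v then wneg u v else wpos u v)
      = if c v = i then wneg u v else wpos u v := by
    intro v
    rw [hcu]
    by_cases h : c v = i
    · simp [h]
    · rw [if_neg fun hh => h hh.symm, if_neg h]
  simp_rw [this]
  rw [Finset.sum_ite]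

lemma errW_transfer {V : Type*} [Fintype V] {k : ℕ}
    (wGp wGn wHp wHn : V → V → ℝ) (η : ℝ)
    (hp : ∀ S T : Finset V, |cutW wGp S T - cutW wHp S T| ≤ η)
    (hn : ∀ S T : Finset V, |cutW wGn S T - cutW wHn S T| ≤ η)
    (c : V → Fin k) :
    |errW wGp wGn c - errW wHp wHn c| ≤ 2 * k * η := by
  rw [errW_decomp, errW_decomp, ← Finset.sum_sub_distrib]
  calc |∑ i : Fin k, _| ≤ ∑ i : Fin k, _ := Finset.abs_sum_le_sum_abs _ _
    _ ≤ ∑ _i : Fin k, (2 * η) := by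
        refine Finset.sum_le_sum fun i _ => ?_
        set S := Finset.univ.filter (fun v => c v = i)
        set T := Finset.univ.filter (fun v => ¬ c v = i)
        have h1 := hn S S
        have h2 := hp S T
        calc |cutW wGn S S + cutW wGp S T - (cutW wHn S S + cutW wHp S T)|
            = |(cutW wGn S S - cutW wHn S S) + (cutW wGp S T - cutW wHp S T)| := by ring_nf
          _ ≤ |cutW wGn S S - cutW wHn S S| + |cutW wGp S T - cutW wHp S T| := abs_add_le _ _
          _ ≤ η + η := add_le_add h1 h2
          _ = 2 * η := by ring
    _ = 2 * k * η := by
        rw [Finset.sum_const, Finset.card_univ, Fintype.card_fin, nsmul_eq_mul]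
        ring

/-- If the positive and negative cut weights of `G` and `H` agree up to `η` on every
pair of vertex sets, then for any clustering with `k` clusters the disagreements and
agreements on `G` and `H` differ by at most `2kη`. -/
theorem err_agr_transfer {V : Type*} [Fintype V] (k : ℕ)
    (wGp wGn wHp wHn : V → V → ℝ) (η : ℝ)
    (hp : ∀ S T : Finset V, |cutW wGp S T - cutW wHp S T| ≤ η)
    (hn : ∀ S T : Finset V, |cutW wGn S T - cutW wHn S T| ≤ η)
    (c : V → Fin k) :
    |errW wGp wGn c - errW wHp wHn c| ≤ 2 * k * η ∧
      |agrW wGp wGn c - agrW wHp wHn c| ≤ 2 * k * η := by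
  refine ⟨errW_transfer wGp wGn wHp wHn η hp hn c, ?_⟩
  have h1 : agrW wGp wGn c = errW wGn wGp c := rfl
  have h2 : agrW wHp wHn c = errW wHn wHp c := rfl
  rw [h1, h2]
  exact errW_transfer wGn wGp wHn wHp η hn hp c
end

section
/- For every n-vertex unweighted complete labeled graph G and every k' ≥ 1, there exists a clustering C' with at most 2k' clusters such that err(C', G) ≤ OPT + 4n²/k', where OPT is the minimum disagreement over all clusterings (with arbitrarily many clusters). -/
/-- Disagreement of a clustering `c` of the unweighted complete labeled graph on
`Fin n` whose edge `{u,v}` (for `u < v`) is labeled positive when `pos u v = true`. -/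
def errU {n : ℕ} (pos : Fin n → Fin n → Bool) (c : Fin n → ℕ) : ℕ :=
  (Finset.univ.filter fun p : Fin n × Fin n =>
    p.1 < p.2 ∧ ((pos p.1 p.2 = true ∧ c p.1 ≠ c p.2) ∨
                 (pos p.1 p.2 = false ∧ c p.1 = c p.2))).card

open Finset

lemma errU_congr {n : ℕ} (pos : Fin n → Fin n → Bool) {c₁ c₂ : Fin n → ℕ}
    (h : ∀ u v, c₁ u = c₁ v ↔ c₂ u = c₂ v) : errU pos c₁ = errU pos c₂ := by
  unfold errU
  congr 1
  apply Finset.filter_congr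
  intro p _
  have h12 := h p.1 p.2
  constructor <;> (rintro ⟨hlt, hc⟩; exact ⟨hlt, by tauto⟩)

lemma errU_le_add {n : ℕ} (pos : Fin n → Fin n → Bool) (c₁ c₂ : Fin n → ℕ) :
    errU pos c₁ ≤ errU pos c₂ +
      (Finset.univ.filter fun p : Fin n × Fin n =>
        ¬(c₁ p.1 = c₁ p.2 ↔ c₂ p.1 = c₂ p.2)).card := by
  unfold errU
  refine le_trans (Finset.card_le_card ?_) (Finset.card_union_le _ _)
  intro p hp
  simp only [Finset.mem_filter, Finset.mem_union, Finset.mem_univ, true_and] at *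
  by_cases hd : c₁ p.1 = c₁ p.2 ↔ c₂ p.1 = c₂ p.2
  · left; obtain ⟨hlt, h⟩ := hp; exact ⟨hlt, by tauto⟩
  · right; exact hd

lemma card_pairs_le {n : ℕ} (S : Finset (Fin n)) (g : Fin n → ℕ) (m : ℕ)
    (h : ∀ v ∈ S, (S.filter fun u => g u = g v).card ≤ m) :
    (Finset.univ.filter fun p : Fin n × Fin n =>
      p.1 ∈ S ∧ p.2 ∈ S ∧ g p.1 = g p.2).card ≤ n * m := by
  have hsub : (Finset.univ.filter fun p : Fin n × Fin n =>
      p.1 ∈ S ∧ p.2 ∈ S ∧ g p.1 = g p.2) ⊆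
      S.biUnion (fun v => (S.filter fun u => g u = g v).image (fun u => (u, v))) := by
    intro p hp
    simp only [Finset.mem_filter, Finset.mem_univ, true_and] at hp
    refine Finset.mem_biUnion.2 ⟨p.2, hp.2.1, ?_⟩
    exact Finset.mem_image.2 ⟨p.1, Finset.mem_filter.2 ⟨hp.1, hp.2.2⟩, rfl⟩
  calc _ ≤ _ := Finset.card_le_card hsub
    _ ≤ ∑ v ∈ S, ((S.filter fun u => g u = g v).image (fun u => (u, v))).card :=
        Finset.card_biUnion_le
    _ ≤ ∑ v ∈ S, m := Finset.sum_le_sum fun v hv =>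
        le_trans Finset.card_image_le (h v hv)
    _ = S.card * m := by rw [Finset.sum_const, smul_eq_mul]
    _ ≤ n * m := Nat.mul_le_mul_right m (by simpa using S.card_le_univ)

/-- For every `n`-vertex unweighted complete labeled graph and every `k' ≥ 1` there
is a clustering with at most `2k'` clusters whose disagreement is at most
`OPT + 4n²/k'`, where `OPT` is the minimum disagreement over all clusterings. -/
theorem exists_coarse_near_optimal_clustering {n : ℕ}
    (pos : Fin n → Fin n → Bool) (hsym : ∀ u v, pos u v = pos v u)
    (k' : ℕ) (hk' : 1 ≤ k') :
    ∃ c' : Fin n → ℕ,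
      (Finset.univ.image c').card ≤ 2 * k' ∧
      ∀ c : Fin n → ℕ, (errU pos c' : ℝ) ≤ (errU pos c : ℝ) + 4 * n ^ 2 / k' := by
  have hk0 : (0:ℝ) < (k' : ℝ) := by exact_mod_cast hk'
  obtain ⟨q, -, hq⟩ := Finset.exists_min_image (Finset.univ : Finset (Fin n → Fin n))
      (fun f => errU pos (fun v => (f v : ℕ))) ⟨id, Finset.mem_univ id⟩
  have hqle : ∀ c : Fin n → ℕ, errU pos (fun v => (q v : ℕ)) ≤ errU pos c := by
    intro c
    have hne : ∀ v : Fin n, (Finset.univ.filter fun u => c u = c v).Nonempty :=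
      fun v => ⟨v, by simp⟩
    set q₀ : Fin n → Fin n := fun v =>
      (Finset.univ.filter fun u => c u = c v).min' (hne v) with hq₀
    have hmem : ∀ v, c (q₀ v) = c v := by
      intro v
      have := (Finset.univ.filter fun u => c u = c v).min'_mem (hne v)
      exact (Finset.mem_filter.1 this).2
    have hiff : ∀ u v, ((q₀ u : ℕ) = (q₀ v : ℕ)) ↔ c u = c v := by
      intro u v
      rw [Fin.val_eq_val]
      constructor
      · intro h; rw [← hmem u, ← hmem v, h]
      · intro h
        simp only [hq₀]
        congr 1
        ext w
        simp [h]
    calc errU pos (fun v => (q v : ℕ)) ≤ errU pos (fun v => (q₀ v : ℕ)) :=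
          hq q₀ (Finset.mem_univ _)
      _ = errU pos c := errU_congr pos hiff
  by_cases hn : n ≤ 2 * k'
  · refine ⟨fun v => (q v : ℕ), ?_, ?_⟩
    · calc (Finset.univ.image fun v => (q v : ℕ)).card
          ≤ (Finset.univ : Finset (Fin n)).card := Finset.card_image_le
        _ = n := by simp
        _ ≤ 2 * k' := hn
    · intro c
      have h1 : (errU pos (fun v => (q v : ℕ)) : ℝ) ≤ (errU pos c : ℝ) := by
        exact_mod_cast hqle c
      have h2 : (0:ℝ) ≤ 4 * (n:ℝ) ^ 2 / k' := by positivity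
      linarith
  · push_neg at hn
    set s : ℕ := n / k' + 1 with hs
    have hs0 : 0 < s := Nat.succ_pos _
    have hns : n < k' * s := by
      rw [mul_comm]
      exact (Nat.div_lt_iff_lt_mul (by omega : 0 < k')).1 (Nat.lt_succ_self _)
    set fib : Fin n → Finset (Fin n) :=
      fun v => Finset.univ.filter (fun u => q u = q v) with hfib
    set Sm : Finset (Fin n) := Finset.univ.filter (fun v => (fib v).card < s) with hSm
    set r : Fin n → ℕ := fun v => (Sm.filter fun u => u < v).card with hr
    set bb : Fin n → ℕ := fun v => r v / s with hbb
    set c' : Fin n → ℕ := fun v => if v ∈ Sm then n + bb v else (q v : ℕ) with hc'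
    have hfibeq : ∀ u v : Fin n, q u = q v → fib u = fib v := by
      intro u v h
      simp only [hfib]
      ext w
      simp [h]
    refine ⟨c', ?_, ?_⟩
    · -- image card bound
      set BV : Finset (Fin n) := Finset.univ.filter (fun v => ¬ (fib v).card < s) with hBV
      have hsub : Finset.univ.image c' ⊆
          ((BV.image q).image (Fin.val)) ∪ ((Finset.range k').image (fun i => n + i)) := by
        intro x hx
        obtain ⟨v, -, rfl⟩ := Finset.mem_image.1 hx
        by_cases hv : v ∈ Sm
        · have hrv : r v < k' * s := by
            have h1 : r v ≤ Sm.card := Finset.card_le_card (Finset.filter_subset _ _)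
            have h2 : Sm.card ≤ n := by simpa using Sm.card_le_univ
            omega
          have hbv : bb v < k' := by
            simp only [hbb]
            exact (Nat.div_lt_iff_lt_mul hs0).2 (by omega)
          refine Finset.mem_union_right _ ?_
          refine Finset.mem_image.2 ⟨bb v, Finset.mem_range.2 hbv, ?_⟩
          simp only [hc', if_pos hv]
        · refine Finset.mem_union_left _ ?_
          have hvB : v ∈ BV := by
            simp only [hBV, Finset.mem_filter, Finset.mem_univ, true_and]
            simp only [hSm, Finset.mem_filter, Finset.mem_univ, true_and] at hv
            exact hv
          refine Finset.mem_image.2 ⟨q v, Finset.mem_image.2 ⟨v, hvB, rfl⟩, ?_⟩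
          simp only [hc', if_neg hv]
      have hcount : ∑ ℓ ∈ (Finset.univ : Finset (Fin n)),
          (Finset.univ.filter fun v => q v = ℓ).card = n := by
        rw [← Finset.card_eq_sum_card_fiberwise (fun v (_ : v ∈ Finset.univ) => Finset.mem_univ (q v))]
        simp
      have hBVcard : (BV.image q).card * s ≤ n := by
        calc (BV.image q).card * s = ∑ _ℓ ∈ BV.image q, s := by
              rw [Finset.sum_const, smul_eq_mul]
          _ ≤ ∑ ℓ ∈ BV.image q, (Finset.univ.filter fun v => q v = ℓ).card := by
              refine Finset.sum_le_sum ?_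
              intro ℓ hℓ
              obtain ⟨v, hv, rfl⟩ := Finset.mem_image.1 hℓ
              simp only [hBV, Finset.mem_filter, Finset.mem_univ, true_and] at hv
              exact le_of_not_gt hv
          _ ≤ ∑ ℓ ∈ (Finset.univ : Finset (Fin n)),
              (Finset.univ.filter fun v => q v = ℓ).card :=
              Finset.sum_le_sum_of_subset (Finset.subset_univ _)
          _ = n := hcount
      have hBVk : (BV.image q).card ≤ k' := by
        by_contra h
        push_neg at h
        have h2 : k' * s < (BV.image q).card * s := (Nat.mul_lt_mul_right hs0).2 h
        omega
      calc (Finset.univ.image c').card ≤ _ := Finset.card_le_card hsub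
        _ ≤ ((BV.image q).image Fin.val).card +
            ((Finset.range k').image (fun i => n + i)).card := Finset.card_union_le _ _
        _ ≤ (BV.image q).card + (Finset.range k').card :=
            add_le_add Finset.card_image_le Finset.card_image_le
        _ ≤ k' + k' := by simp [hBVk]
        _ = 2 * k' := by ring
    · -- error bound
      intro c
      have hrmono : ∀ u v : Fin n, u ∈ Sm → v ∈ Sm → u < v → r u < r v := by
        intro u v hu hv huv
        apply Finset.card_lt_card
        refine Finset.ssubset_def.2 ⟨?_, ?_⟩
        · intro w hw
          rw [Finset.mem_filter] at *
          exact ⟨hw.1, lt_trans hw.2 huv⟩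
        · intro h'
          have := h' (Finset.mem_filter.2 ⟨hu, huv⟩)
          exact absurd (Finset.mem_filter.1 this).2 (lt_irrefl u)
      have hrinj : ∀ u ∈ Sm, ∀ v ∈ Sm, r u = r v → u = v := by
        intro u hu v hv h
        rcases lt_trichotomy u v with h1 | h1 | h1
        · exact absurd h (Nat.ne_of_lt (hrmono u v hu hv h1))
        · exact h1
        · exact absurd h.symm (Nat.ne_of_lt (hrmono v u hv hu h1))
      have hbinfib : ∀ v ∈ Sm, (Sm.filter fun u => bb u = bb v).card ≤ s := by
        intro v hv
        have hle : (Sm.filter fun u => bb u = bb v).card ≤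
            (Finset.Ico (bb v * s) (bb v * s + s)).card := by
          apply Finset.card_le_card_of_injOn r
          · intro u hu
            obtain ⟨huS, hbu⟩ := Finset.mem_filter.1 hu
            rw [Finset.mem_coe, Finset.mem_Ico]
            constructor
            · calc bb v * s = r u / s * s := by rw [← hbu]
                _ ≤ r u := Nat.div_mul_le_self _ _
            · have h1 : r u / s < bb v + 1 := by
                have : r u / s = bb v := hbu
                omega
              have h2 := (Nat.div_lt_iff_lt_mul hs0).1 h1
              have h3 : (bb v + 1) * s = bb v * s + s := by ring
              omega
          · intro a ha b hb hab
            exact hrinj a (Finset.mem_filter.1 (Finset.mem_coe.1 ha)).1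
              b (Finset.mem_filter.1 (Finset.mem_coe.1 hb)).1 hab
        simpa [Nat.card_Ico] using hle
      have hclfib : ∀ v ∈ Sm, (Sm.filter fun u => (q u : ℕ) = (q v : ℕ)).card ≤ s := by
        intro v hv
        have hsub : (Sm.filter fun u => (q u : ℕ) = (q v : ℕ)) ⊆ fib v := by
          intro u hu
          obtain ⟨-, h⟩ := Finset.mem_filter.1 hu
          simp only [hfib, Finset.mem_filter, Finset.mem_univ, true_and]
          exact Fin.val_injective h
        have hv' : (fib v).card < s := (Finset.mem_filter.1 hv).2
        exact le_of_lt (lt_of_le_of_lt (Finset.card_le_card hsub) hv')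
      have hDsub : (Finset.univ.filter fun p : Fin n × Fin n =>
          ¬(c' p.1 = c' p.2 ↔ (q p.1 : ℕ) = (q p.2 : ℕ))) ⊆
          (Finset.univ.filter fun p : Fin n × Fin n =>
            p.1 ∈ Sm ∧ p.2 ∈ Sm ∧ (q p.1 : ℕ) = (q p.2 : ℕ)) ∪
          (Finset.univ.filter fun p : Fin n × Fin n =>
            p.1 ∈ Sm ∧ p.2 ∈ Sm ∧ bb p.1 = bb p.2) := by
        intro p hp
        simp only [Finset.mem_filter, Finset.mem_univ, true_and] at hp
        have hbig : ∀ u v : Fin n, u ∈ Sm → v ∉ Sm →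
            (c' u ≠ c' v ∧ (q u : ℕ) ≠ (q v : ℕ)) := by
          intro u v hu hv
          constructor
          · simp only [hc', if_pos hu, if_neg hv]
            have := (q v).isLt
            omega
          · intro h
            have hfe : fib u = fib v := hfibeq _ _ (Fin.val_injective h)
            have hh1 : (fib u).card < s := by
              simpa [hSm] using hu
            have hh2 : ¬ (fib v).card < s := by
              simpa [hSm] using hv
            rw [hfe] at hh1
            exact hh2 hh1
        by_cases h1 : p.1 ∈ Sm <;> by_cases h2 : p.2 ∈ Sm
        · have hcc : c' p.1 = c' p.2 ↔ bb p.1 = bb p.2 := by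
            simp only [hc', if_pos h1, if_pos h2]
            omega
          by_cases hqq : (q p.1 : ℕ) = (q p.2 : ℕ)
          · refine Finset.mem_union_left _ ?_
            simp only [Finset.mem_filter, Finset.mem_univ, true_and]
            exact ⟨h1, h2, hqq⟩
          · have hbbq : bb p.1 = bb p.2 := by tauto
            refine Finset.mem_union_right _ ?_
            simp only [Finset.mem_filter, Finset.mem_univ, true_and]
            exact ⟨h1, h2, hbbq⟩
        · exact absurd (iff_of_false (hbig p.1 p.2 h1 h2).1 (hbig p.1 p.2 h1 h2).2) hp
        · exfalso
          apply hp
          have h := hbig p.2 p.1 h2 h1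
          exact iff_of_false (fun he => h.1 he.symm) (fun he => h.2 he.symm)
        · exfalso
          apply hp
          simp only [hc', if_neg h1, if_neg h2]
      have hDcard : (Finset.univ.filter fun p : Fin n × Fin n =>
          ¬(c' p.1 = c' p.2 ↔ (q p.1 : ℕ) = (q p.2 : ℕ))).card ≤ n * s + n * s := by
        calc _ ≤ _ := Finset.card_le_card hDsub
          _ ≤ _ := Finset.card_union_le _ _
          _ ≤ n * s + n * s :=
            add_le_add (card_pairs_le Sm (fun v => (q v : ℕ)) s hclfib)
              (card_pairs_le Sm bb s hbinfib)
      have h1 : errU pos c' ≤ errU pos (fun v => (q v : ℕ)) +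
          (Finset.univ.filter fun p : Fin n × Fin n =>
            ¬(c' p.1 = c' p.2 ↔ (q p.1 : ℕ) = (q p.2 : ℕ))).card :=
        errU_le_add pos c' _
      have h2 := hqle c
      have hnat : errU pos c' ≤ errU pos c + (n * s + n * s) := by omega
      have hreal : (errU pos c' : ℝ) ≤ (errU pos c : ℝ) + (n * s + n * s : ℕ) := by
        exact_mod_cast hnat
      have hsk : ((n / k' : ℕ) : ℝ) * k' ≤ n := by exact_mod_cast Nat.div_mul_le_self n k'
      have hsr : (s : ℝ) = ((n / k' : ℕ) : ℝ) + 1 := by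
        rw [hs]; push_cast; ring
      have hkn : 2 * (k' : ℝ) < n := by exact_mod_cast hn
      have hn0 : (0:ℝ) ≤ (n:ℝ) := Nat.cast_nonneg n
      have key : ((n * s + n * s : ℕ) : ℝ) ≤ 4 * (n:ℝ) ^ 2 / k' := by
        push_cast
        rw [le_div_iff₀ hk0]
        nlinarith [mul_le_mul_of_nonneg_left hsk (by linarith : (0:ℝ) ≤ 2 * n),
          mul_le_mul_of_nonneg_left hkn.le hn0]
      linarith
end

section
/- Let G and H be weighted labeled graphs on vertex set V, decomposed into positive parts G⁺, H⁺ and negative parts G⁻, H⁻. Then for any clustering C with k clusters, |err(C, G) - err(C, H)| ≤ k · (d_cut(G⁻, H⁻) + d_cut(G⁺, H⁺)) and |agr(C, G) - agr(C, H)| ≤ k · (d_cut(G⁻, H⁻) + d_cut(G⁺, H⁺)), where d_cut(A, B) = max_{S,T ⊆ V} |w_A(S,T) - w_B(S,T)|. -/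
open Finset in
lemma errW_eq_sum_cut {V : Type*} [Fintype V] [DecidableEq V] {k : ℕ}
    (a b : V → V → ℝ) (c : V → Fin k) :
    (∑ u, ∑ v, if c u = c v then a u v else b u v) =
      ∑ i : Fin k,
        (cutW a (univ.filter fun u => c u = i) (univ.filter fun u => c u = i) +
         cutW b (univ.filter fun u => c u = i) (univ.filter fun u => c u = i)ᶜ) := by
  rw [← Finset.sum_fiberwise_of_maps_to (g := c) (t := univ)
      (fun x _ => mem_univ (c x))]
  refine Finset.sum_congr rfl fun i _ => ?_
  unfold cutW
  rw [← Finset.sum_add_distrib]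
  refine Finset.sum_congr rfl fun u hu => ?_
  have hcu : c u = i := (Finset.mem_filter.mp hu).2
  rw [← Finset.sum_add_sum_compl (univ.filter fun v => c v = i)
      (fun v => if c u = c v then a u v else b u v)]
  congr 1
  · refine Finset.sum_congr rfl fun v hv => ?_
    have : c v = i := (Finset.mem_filter.mp hv).2
    rw [if_pos (by rw [hcu, this])]
  · refine Finset.sum_congr rfl fun v hv => ?_
    have hv' : ¬ c v = i := by
      simpa using (Finset.mem_compl.mp hv)
    rw [if_neg (by rw [hcu]; exact fun h => hv' h.symm)]

/-- If the positive parts of `G` and `H` are at cut distance at most `dpos` and the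
negative parts at cut distance at most `dneg` (i.e. `|w_G(S,T) - w_H(S,T)| ≤ d` for
all vertex sets `S, T`), then for any clustering with `k` clusters, both the
disagreements and the agreements on `G` and `H` differ by at most
`k · (dneg + dpos)`. -/
theorem err_agr_cut_distance_transfer {V : Type*} [Fintype V] (k : ℕ)
    (wGp wGn wHp wHn : V → V → ℝ) (dpos dneg : ℝ)
    (hp : ∀ S T : Finset V, |cutW wGp S T - cutW wHp S T| ≤ dpos)
    (hn : ∀ S T : Finset V, |cutW wGn S T - cutW wHn S T| ≤ dneg)
    (c : V → Fin k) :
    |errW wGp wGn c - errW wHp wHn c| ≤ k * (dneg + dpos) ∧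
      |agrW wGp wGn c - agrW wHp wHn c| ≤ k * (dneg + dpos) := by
  classical
  have main : ∀ (d1 d2 : ℝ) (aG bG aH bH : V → V → ℝ),
      (∀ S T : Finset V, |cutW aG S T - cutW aH S T| ≤ d1) →
      (∀ S T : Finset V, |cutW bG S T - cutW bH S T| ≤ d2) →
      |(∑ u, ∑ v, if c u = c v then aG u v else bG u v) -
       (∑ u, ∑ v, if c u = c v then aH u v else bH u v)| ≤ k * (d1 + d2) := by
    intro d1 d2 aG bG aH bH ha hb
    rw [errW_eq_sum_cut aG bG c, errW_eq_sum_cut aH bH c, ← Finset.sum_sub_distrib]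
    calc |∑ i : Fin k, _| ≤ ∑ i : Fin k, (d1 + d2) := by
          refine (Finset.abs_sum_le_sum_abs _ _).trans (Finset.sum_le_sum fun i _ => ?_)
          set S := Finset.univ.filter fun u => c u = i
          calc |cutW aG S S + cutW bG S Sᶜ - (cutW aH S S + cutW bH S Sᶜ)|
              = |(cutW aG S S - cutW aH S S) + (cutW bG S Sᶜ - cutW bH S Sᶜ)| := by ring_nf
            _ ≤ |cutW aG S S - cutW aH S S| + |cutW bG S Sᶜ - cutW bH S Sᶜ| := abs_add_le _ _
            _ ≤ d1 + d2 := add_le_add (ha S S) (hb S Sᶜ)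
      _ = (k : ℝ) * (d1 + d2) := by rw [Finset.sum_const, Finset.card_univ, Fintype.card_fin, nsmul_eq_mul]
  exact ⟨main dneg dpos wGn wGp wHn wHp hn hp, by
    have := main dpos dneg wGp wGn wHp wHn hp hn
    rwa [add_comm dpos dneg] at this⟩
end

section
/- Let H' be obtained from a weighted labeled graph H by splitting each vertex v into v⁺ and v⁻, attaching positive edges of v to v⁺ and negative edges to v⁻, and adding a positive edge v⁺v⁻ of infinite (or sufficiently large finite) weight. Then there is a bijection between clusterings of H and clusterings of H' of finite disagreement (those placing v⁺ and v⁻ together for all v) preserving the disagreement value; in particular the optimal MinDis values of H and H' coincide. -/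
/-- Disagreement (over ordered pairs) of the clustering `c` with the labeled
weighted graph given by positive weights `wpos` and negative weights `wneg`. -/
def errOrd {V : Type*} [Fintype V] (wpos wneg : V → V → ℝ) (c : V → ℕ) : ℝ :=
  ∑ u, ∑ v, if c u = c v then wneg u v else wpos u v

/-- Positive weights of the split graph `H'`: each vertex `v` of `H` is split into
`v⁺ = inl v` and `v⁻ = inr v`; positive edges of `H` are attached to the `⁺`-copies
and `v⁺` is joined to `v⁻` by a positive edge of large weight `W`. -/
noncomputable def splitPos {V : Type*} [DecidableEq V]
    (wpos : V → V → ℝ) (W : ℝ) : V ⊕ V → V ⊕ V → ℝ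
  | .inl u, .inl v => wpos u v
  | .inl u, .inr v => if u = v then W else 0
  | .inr u, .inl v => if u = v then W else 0
  | .inr _, .inr _ => 0

/-- Negative weights of the split graph `H'`: negative edges of `H` are attached to
the `⁻`-copies. -/
def splitNeg {V : Type*} (wneg : V → V → ℝ) : V ⊕ V → V ⊕ V → ℝ
  | .inr u, .inr v => wneg u v
  | _, _ => 0

section Aux
variable {V : Type*} [Fintype V] [DecidableEq V] (wpos wneg : V → V → ℝ) (W : ℝ)

lemma errOrd_nonneg (hpos : ∀ u v, 0 ≤ wpos u v) (hneg : ∀ u v, 0 ≤ wneg u v)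
    (c : V → ℕ) : 0 ≤ errOrd wpos wneg c := by
  apply Finset.sum_nonneg; intro u _
  apply Finset.sum_nonneg; intro v _
  split <;> [exact hneg u v; exact hpos u v]

lemma split_nonneg (hpos : ∀ u v, 0 ≤ wpos u v) (hneg : ∀ u v, 0 ≤ wneg u v) (hW : 0 ≤ W) :
    (∀ u v, 0 ≤ splitPos wpos W u v) ∧ (∀ u v, 0 ≤ splitNeg wneg u v) := by
  constructor <;> rintro (u|u) (v|v) <;>
    simp [splitPos, splitNeg] <;>
    first | positivity | (intro; assumption) | apply hpos | apply hneg

lemma errOrd_split_eq (c' : V ⊕ V → ℕ) (h : ∀ v, c' (Sum.inl v) = c' (Sum.inr v)) :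
    errOrd (splitPos wpos W) (splitNeg wneg) c' =
      errOrd wpos wneg (fun v => c' (Sum.inl v)) := by
  unfold errOrd
  simp only [Fintype.sum_sum_type]
  have key : ∀ u v : V,
      ((if c' (Sum.inl u) = c' (Sum.inr v) then splitNeg wneg (Sum.inl u) (Sum.inr v)
        else splitPos wpos W (Sum.inl u) (Sum.inr v)) = 0) := by
    intro u v
    simp only [splitNeg, splitPos]
    by_cases huv : u = v
    · subst huv; simp [h u]
    · simp [huv]
  have key2 : ∀ u v : V,
      ((if c' (Sum.inr u) = c' (Sum.inl v) then splitNeg wneg (Sum.inr u) (Sum.inl v)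
        else splitPos wpos W (Sum.inr u) (Sum.inl v)) = 0) := by
    intro u v
    simp only [splitNeg, splitPos]
    by_cases huv : u = v
    · subst huv; simp [h u]
    · simp [huv]
  simp only [key, key2, Finset.sum_const_zero, add_zero, zero_add]
  rw [← Finset.sum_add_distrib]
  congr 1; ext u
  rw [← Finset.sum_add_distrib]
  congr 1; ext v
  simp only [splitNeg, splitPos, h u, h v]
  by_cases hc : c' (Sum.inr u) = c' (Sum.inr v) <;> simp [hc]

end Aux

/-- Vertex splitting preserves correlation clustering: clusterings of `H` correspond
to clusterings of `H'` placing `v⁺` and `v⁻` together (for all `v`) with the same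
disagreement; any clustering of `H'` separating some `v⁺` from `v⁻` has
disagreement at least `W`; and if `W` exceeds the total negative weight, the optimal
MinDis values of `H` and `H'` coincide. -/
theorem vertex_splitting {V : Type*} [Fintype V] [DecidableEq V]
    (wpos wneg : V → V → ℝ)
    (hpos : ∀ u v, 0 ≤ wpos u v) (hneg : ∀ u v, 0 ≤ wneg u v)
    (hps : ∀ u v, wpos u v = wpos v u) (hns : ∀ u v, wneg u v = wneg v u)
    (W : ℝ) (hW : 0 ≤ W) :
    (∀ c : V → ℕ,
      errOrd (splitPos wpos W) (splitNeg wneg) (Sum.elim c c) = errOrd wpos wneg c) ∧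
    (∀ c' : V ⊕ V → ℕ, (∀ v, c' (Sum.inl v) = c' (Sum.inr v)) →
      errOrd (splitPos wpos W) (splitNeg wneg) c' =
        errOrd wpos wneg (fun v => c' (Sum.inl v))) ∧
    (∀ c' : V ⊕ V → ℕ, (∃ v, c' (Sum.inl v) ≠ c' (Sum.inr v)) →
      W ≤ errOrd (splitPos wpos W) (splitNeg wneg) c') ∧
    ((∑ u, ∑ v, wneg u v) < W →
      sInf {x : ℝ | ∃ c' : V ⊕ V → ℕ, errOrd (splitPos wpos W) (splitNeg wneg) c' = x} =
        sInf {x : ℝ | ∃ c : V → ℕ, errOrd wpos wneg c = x}) := by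
  obtain ⟨hp', hn'⟩ := split_nonneg wpos wneg W hpos hneg hW
  have part2 : ∀ c' : V ⊕ V → ℕ, (∀ v, c' (Sum.inl v) = c' (Sum.inr v)) →
      errOrd (splitPos wpos W) (splitNeg wneg) c' =
        errOrd wpos wneg (fun v => c' (Sum.inl v)) :=
    fun c' h => errOrd_split_eq wpos wneg W c' h
  have part1 : ∀ c : V → ℕ,
      errOrd (splitPos wpos W) (splitNeg wneg) (Sum.elim c c) = errOrd wpos wneg c := by
    intro c
    simpa using part2 (Sum.elim c c) (fun v => rfl)
  have part3 : ∀ c' : V ⊕ V → ℕ, (∃ v, c' (Sum.inl v) ≠ c' (Sum.inr v)) →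
      W ≤ errOrd (splitPos wpos W) (splitNeg wneg) c' := by
    rintro c' ⟨v, hv⟩
    have h1 : W ≤ ∑ u, if c' (Sum.inl v) = c' u
        then splitNeg wneg (Sum.inl v) u else splitPos wpos W (Sum.inl v) u := by
      calc W = (if c' (Sum.inl v) = c' (Sum.inr v)
            then splitNeg wneg (Sum.inl v) (Sum.inr v)
            else splitPos wpos W (Sum.inl v) (Sum.inr v)) := by simp [hv, splitPos]
        _ ≤ _ := Finset.single_le_sum (f := fun u => if c' (Sum.inl v) = c' u
            then splitNeg wneg (Sum.inl v) u else splitPos wpos W (Sum.inl v) u)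
            (fun u _ => by split <;> [exact hn' _ _; exact hp' _ _])
            (Finset.mem_univ _)
    refine h1.trans ?_
    exact Finset.single_le_sum (f := fun u => ∑ w, if c' u = c' w
        then splitNeg wneg u w else splitPos wpos W u w)
      (fun u _ => Finset.sum_nonneg fun w _ => by split <;> [exact hn' _ _; exact hp' _ _])
      (Finset.mem_univ (Sum.inl v))
  refine ⟨part1, part2, part3, ?_⟩
  intro hWbig
  set S' : Set ℝ := {x : ℝ | ∃ c' : V ⊕ V → ℕ, errOrd (splitPos wpos W) (splitNeg wneg) c' = x}
  set S : Set ℝ := {x : ℝ | ∃ c : V → ℕ, errOrd wpos wneg c = x}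
  have hSsub : S ⊆ S' := by
    rintro x ⟨c, rfl⟩
    exact ⟨Sum.elim c c, part1 c⟩
  have hSne : S.Nonempty := ⟨_, fun _ => 0, rfl⟩
  have hS'ne : S'.Nonempty := hSne.mono hSsub
  have hbdd' : BddBelow S' := ⟨0, by rintro x ⟨c', rfl⟩; exact errOrd_nonneg _ _ hp' hn' c'⟩
  have hbdd : BddBelow S := hbdd'.mono hSsub
  have hconst : errOrd wpos wneg (fun _ => 0) = ∑ u, ∑ v, wneg u v := by
    simp [errOrd]
  apply le_antisymm
  · exact csInf_le_csInf hbdd' hSne hSsub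
  · apply le_csInf hS'ne
    rintro x ⟨c', rfl⟩
    by_cases h : ∀ v, c' (Sum.inl v) = c' (Sum.inr v)
    · rw [part2 c' h]
      exact csInf_le hbdd ⟨_, rfl⟩
    · push_neg at h
      have := part3 c' h
      calc sInf S ≤ errOrd wpos wneg (fun _ => 0) := csInf_le hbdd ⟨_, rfl⟩
        _ = ∑ u, ∑ v, wneg u v := hconst
        _ ≤ W := hWbig.le
        _ ≤ _ := this
end
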